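/- Let (𝒴, p, *E) be an internal lattice-normed vector lattice (𝒴 a vector lattice, p a lattice norm: |x| ≤ |y| implies p(x) ≤ p(y)). Then the quotient 𝒴̄ = fin(𝒴)/n(𝒴) with norm p̄([x]) = inf_E{e ∈ E : e ≥ p(x)} is a lattice-normed vector lattice: 𝒴̄ is a vector lattice and |[κ]| ≤ |[ξ]| implies p̄([κ]) ≤ p̄([ξ]). -/

import Mathlib

open Filter

/-- The hyperfinite extension filter: we realize the nonstandard extension `*Z` of a
standard set `Z` as the ultrapower `Germ (hyperfilter ℕ) Z`. -/
notation "γ*" Z => Germ ((hyperfilter ℕ : Ultrafilter ℕ) : Filter ℕ) Z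

/-- `fin(*E)`: elements of `*E` dominated by a standard element of `E`. -/
def finE {E : Type} [AddCommGroup E] [Lattice E] : Set (γ* E) :=
  {e | ∃ u : E, |e| ≤ (↑u : γ* E)}

/-- `η(*E)`: elements of `*E` whose set of standard dominants has infimum `0` in `E`. -/
def etaE {E : Type} [AddCommGroup E] [Lattice E] : Set (γ* E) :=
  {e | IsGLB {u : E | |e| ≤ ((↑u : γ* E))} (0 : E)}

section Helpers

variable {E : Type} [AddCommGroup E] [Lattice E] [CovariantClass E E (· + ·) (· ≤ ·)]

private lemma my_nsmul_mono {a b : E} (h : a ≤ b) : ∀ n : ℕ, n • a ≤ n • b := by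
  intro n
  induction n with
  | zero => simp
  | succ n ih => rw [succ_nsmul, succ_nsmul]; exact add_le_add ih h

private lemma glb_of_all_nonpos (h : ∀ e : E, e ≤ 0) (S : Set E) : IsGLB S (0 : E) := by
  have h0 : ∀ e : E, e = 0 := fun e => le_antisymm (h e) (neg_nonpos.mp (h (-e)))
  exact ⟨fun x _ => (h0 x).ge, fun b _ => h b⟩

private lemma all_nonpos_of_glb_empty (h : IsGLB (∅ : Set E) (0 : E)) : ∀ e : E, e ≤ 0 :=
  fun e => h.2 fun x hx => absurd hx (Set.notMem_empty x)

private lemma le_zero_of_le_nsmul (D : Set E)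
    (hD : ∀ u ∈ D, ∀ v ∈ D, u ⊓ v ∈ D) (hglb : IsGLB D 0) (hne : D.Nonempty) :
    ∀ n : ℕ, ∀ b : E, (∀ u ∈ D, b ≤ n • u) → b ≤ 0 := by
  intro n
  induction n with
  | zero =>
    intro b hb
    obtain ⟨u, hu⟩ := hne
    simpa using hb u hu
  | succ n ih =>
    intro b hb
    refine hglb.2 fun v hv => ?_
    have key : b - v ≤ 0 := by
      refine ih (b - v) fun u hu => ?_
      have h1 : b ≤ (n + 1) • (u ⊓ v) := hb _ (hD u hu v hv)
      have h2 : (n + 1) • (u ⊓ v) = n • (u ⊓ v) + (u ⊓ v) := succ_nsmul _ _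
      have h4 : b - v ≤ n • (u ⊓ v) + (u ⊓ v) - v := by
        rw [← h2]; exact sub_le_sub_right h1 v
      refine h4.trans ?_
      have h5 : n • (u ⊓ v) + (u ⊓ v) - v ≤ n • (u ⊓ v) := by
        rw [add_sub_assoc]
        calc n • (u ⊓ v) + ((u ⊓ v) - v) ≤ n • (u ⊓ v) + 0 :=
              add_le_add_right (sub_nonpos.mpr inf_le_right) _
          _ = n • (u ⊓ v) := add_zero _
      exact h5.trans (my_nsmul_mono inf_le_left n)
    exact sub_nonpos.mp key

end Helpers

section Sdom

variable {Y E : Type}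
    [AddCommGroup Y] [Lattice Y] [CovariantClass Y Y (· + ·) (· ≤ ·)] [Module ℝ Y]
    [AddCommGroup E] [Lattice E] [CovariantClass E E (· + ·) (· ≤ ·)] [Module ℝ E]
    (q : Y → E)

/-- The set of standard dominants of `*q x`. -/
private def Sdom (x : γ* Y) : Set E := {u : E | Germ.map q x ≤ (↑u : γ* E)}

private lemma abs_coe_germ (f : ℕ → E) :
    |(↑f : γ* E)| = (↑(fun i => |f i|) : γ* E) := rfl

private lemma Sdom_coe {f : ℕ → Y} {u : E} :
    u ∈ Sdom q ↑f ↔ ∀ᶠ i in (hyperfilter ℕ : Filter ℕ), q (f i) ≤ u := by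
  show Germ.map q ↑f ≤ (↑u : γ* E) ↔ _
  rw [Germ.map_coe]
  exact Germ.coe_le

private lemma abs_map_q (hq_nonneg : ∀ x, 0 ≤ q x) (x : γ* Y) : |Germ.map q x| = Germ.map q x := by
  induction x using Germ.inductionOn with
  | h f =>
    rw [Germ.map_coe, abs_coe_germ]
    exact congrArg _ (funext fun i => abs_of_nonneg (hq_nonneg (f i)))

private lemma abs_set_eq (hq_nonneg : ∀ x, 0 ≤ q x) (x : γ* Y) :
    {u : E | |Germ.map q x| ≤ (↑u : γ* E)} = Sdom q x := by
  unfold Sdom; rw [abs_map_q q hq_nonneg]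

private lemma Sdom_nonneg (hq_nonneg : ∀ x, 0 ≤ q x) {x : γ* Y} {u : E} (hu : u ∈ Sdom q x) : (0 : E) ≤ u := by
  induction x using Germ.inductionOn with
  | h f =>
    have h := (Sdom_coe q).mp hu
    have : (↑(0 : E) : γ* E) ≤ ↑u := by
      refine le_trans ?_ (show Germ.map q ↑f ≤ (↑u : γ* E) from hu)
      show (↑((fun _ => 0) : ℕ → E) : γ* E) ≤ ↑(q ∘ f)
      exact Germ.coe_le.mpr (Eventually.of_forall fun i => hq_nonneg (f i))
    exact Germ.const_le_iff.mp this

private lemma Sdom_lb (hq_nonneg : ∀ x, 0 ≤ q x) (x : γ* Y) : (0 : E) ∈ lowerBounds (Sdom q x) :=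
  fun _ hu => Sdom_nonneg q hq_nonneg hu

private lemma Sdom_inf {x : γ* Y} {u v : E} (hu : u ∈ Sdom q x) (hv : v ∈ Sdom q x) :
    u ⊓ v ∈ Sdom q x := by
  show Germ.map q x ≤ (↑(u ⊓ v) : γ* E)
  rw [Germ.const_inf]
  exact le_inf hu hv

end Sdom

/-- for an internal lattice-normed vector lattice `(*Y, *q, *E)`, the
quotient `fin/n` is again a lattice-normed vector lattice (stated on representatives):
`n` is a lattice ideal of `fin` (so the quotient is a vector lattice), and the
quotient norm `p̄([x]) = inf_E {e : *q x ≤ e}` is monotone: `|[κ]| ≤ |[ξ]|` (i.e.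
`|κ| ≤ |ξ| + d` for some null `d`) implies `p̄([κ]) ≤ p̄([ξ])`. -/
theorem stmt13 {Y E : Type}
    [AddCommGroup Y] [Lattice Y] [CovariantClass Y Y (· + ·) (· ≤ ·)] [Module ℝ Y]
    [AddCommGroup E] [Lattice E] [CovariantClass E E (· + ·) (· ≤ ·)] [Module ℝ E]
    (hE : ∀ S : Set E, S.Nonempty → BddAbove S → ∃ s, IsLUB S s)
    (q : Y → E)
    (hq_nonneg : ∀ x, 0 ≤ q x)
    (hq_zero : ∀ x, q x = 0 ↔ x = 0)
    (hq_smul : ∀ (c : ℝ) (x : Y), q (c • x) = |c| • q x)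
    (hq_add : ∀ x y, q (x + y) ≤ q x + q y)
    (hq_mono : ∀ x y : Y, |x| ≤ |y| → q x ≤ q y) :
    let nY : Set (γ* Y) := {x | Germ.map q x ∈ etaE}
    let finY : Set (γ* Y) := {x | Germ.map q x ∈ finE}
    -- `n` is a lattice ideal of `fin`, hence the quotient is a vector lattice:
    (nY ⊆ finY) ∧
    (0 ∈ nY) ∧ (∀ κ ξ, κ ∈ nY → ξ ∈ nY → κ + ξ ∈ nY) ∧
    (∀ (c : ℝ) (κ), κ ∈ nY → c • κ ∈ nY) ∧
    (∀ κ ξ : γ* Y, |κ| ≤ |ξ| → ξ ∈ nY → κ ∈ nY) ∧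
    -- the quotient norm is a lattice norm:
    (∀ κ ξ : γ* Y, κ ∈ finY → ξ ∈ finY →
      (∃ d ∈ nY, |κ| ≤ |ξ| + d) →
      ∀ e₁ e₂ : E,
        IsGLB {e : E | Germ.map q κ ≤ (↑e : γ* E)} e₁ →
        IsGLB {e : E | Germ.map q ξ ≤ (↑e : γ* E)} e₂ →
        e₁ ≤ e₂) := by
  intro nY finY
  classical
  -- membership characterizations
  have hmem_n : ∀ x : γ* Y, x ∈ nY ↔ IsGLB (Sdom q x) 0 := by
    intro x
    show Germ.map q x ∈ etaE ↔ _
    unfold etaE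
    rw [Set.mem_setOf_eq, abs_set_eq q hq_nonneg]
  have hmem_fin : ∀ x : γ* Y, x ∈ finY ↔ ∃ u : E, u ∈ Sdom q x := by
    intro x
    show Germ.map q x ∈ finE ↔ _
    unfold finE
    rw [Set.mem_setOf_eq]
    constructor
    · rintro ⟨u, hu⟩
      exact ⟨u, by rw [← abs_set_eq q hq_nonneg]; exact hu⟩
    · rintro ⟨u, hu⟩
      exact ⟨u, by rw [← abs_set_eq q hq_nonneg] at hu; exact hu⟩
  -- sum of dominants dominates the sum
  have hSadd : ∀ (κ ξ : γ* Y) {u v : E}, u ∈ Sdom q κ → v ∈ Sdom q ξ →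
      u + v ∈ Sdom q (κ + ξ) := by
    intro κ ξ u v hu hv
    induction κ using Germ.inductionOn with
    | h f =>
      induction ξ using Germ.inductionOn with
      | h g =>
        have hu' := (Sdom_coe q).mp hu
        have hv' := (Sdom_coe q).mp hv
        have : (↑f + ↑g : γ* Y) = ↑(f + g) := rfl
        rw [this, Sdom_coe q]
        filter_upwards [hu', hv'] with i h1 h2
        exact (hq_add (f i) (g i)).trans (add_le_add h1 h2)
  -- monotonicity
  have hSmono : ∀ (κ ξ : γ* Y), |κ| ≤ |ξ| → Sdom q ξ ⊆ Sdom q κ := by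
    intro κ ξ hle u hu
    induction κ using Germ.inductionOn with
    | h f =>
      induction ξ using Germ.inductionOn with
      | h g =>
        have hle' : ∀ᶠ i in (hyperfilter ℕ : Filter ℕ), |f i| ≤ |g i| := Germ.coe_le.mp hle
        have hu' := (Sdom_coe q).mp hu
        rw [Sdom_coe q]
        filter_upwards [hle', hu'] with i h1 h2
        exact (hq_mono _ _ h1).trans h2
  -- scalar multiples of dominants
  have hSsmul : ∀ (c : ℝ) (κ : γ* Y) {u : E}, u ∈ Sdom q κ →
      (⌈|c|⌉₊ : ℕ) • u ∈ Sdom q (c • κ) := by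
    intro c κ u hu
    induction κ using Germ.inductionOn with
    | h f =>
      have hu' := (Sdom_coe q).mp hu
      have : (c • (↑f : γ* Y)) = ↑(c • f) := (Germ.coe_smul c f).symm
      rw [this, Sdom_coe q]
      filter_upwards [hu'] with i hi
      set n : ℕ := ⌈|c|⌉₊ with hn
      have hcn : |c| ≤ (n : ℝ) := Nat.le_ceil _
      have hq1 : q ((c • f) i) = |c| • q (f i) := hq_smul c (f i)
      have hq2 : |c| • q (f i) ≤ n • q (f i) := by
        have hd : (0 : ℝ) ≤ (n : ℝ) - |c| := sub_nonneg.mpr hcn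
        have h3 : ((n : ℝ) - |c|) • q (f i) = q ((((n : ℝ) - |c|)) • f i) := by
          rw [hq_smul, abs_of_nonneg hd]
        have h4 : |c| • q (f i) + ((n : ℝ) - |c|) • q (f i) = n • q (f i) := by
          rw [← add_smul]
          have : |c| + ((n : ℝ) - |c|) = (n : ℝ) := by ring
          rw [this, Nat.cast_smul_eq_nsmul]
        calc |c| • q (f i) ≤ |c| • q (f i) + ((n : ℝ) - |c|) • q (f i) := by
              rw [h3]; exact le_add_of_nonneg_right (hq_nonneg _)
          _ = n • q (f i) := h4
      calc q ((c • f) i) = |c| • q (f i) := hq1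
        _ ≤ n • q (f i) := hq2
        _ ≤ n • u := my_nsmul_mono hi n
  -- triangle-type estimate for the last clause
  have hStri : ∀ (κ ξ δ : γ* Y), |κ| ≤ |ξ| + δ → ∀ {v w : E},
      v ∈ Sdom q ξ → w ∈ Sdom q δ → v + w ∈ Sdom q κ := by
    intro κ ξ δ hle v w hv hw
    induction κ using Germ.inductionOn with
    | h f =>
      induction ξ using Germ.inductionOn with
      | h g =>
        induction δ using Germ.inductionOn with
        | h d =>
          have hle' : ∀ᶠ i in (hyperfilter ℕ : Filter ℕ), |f i| ≤ |g i| + d i := by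
            have : (|(↑f : γ* Y)| : γ* Y) = ↑(fun i => |f i|) := rfl
            have h2 : (|(↑g : γ* Y)| + ↑d : γ* Y) = ↑(fun i => |g i| + d i) := rfl
            rw [this, h2] at hle
            exact Germ.coe_le.mp hle
          have hv' := (Sdom_coe q).mp hv
          have hw' := (Sdom_coe q).mp hw
          rw [Sdom_coe q]
          filter_upwards [hle', hv', hw'] with i h1 h2 h3
          have habs : |f i| ≤ |g i| + |d i| := h1.trans (add_le_add_right (le_abs_self _) _)
          have hq1 : q (f i) ≤ q (|g i| + |d i|) := by
            exact hq_mono _ _ (habs.trans (le_abs_self _))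
          have hqabs : ∀ y : Y, q |y| = q y := by
            intro y
            exact le_antisymm (hq_mono _ _ (abs_abs y).le) (hq_mono _ _ (abs_abs y).ge)
          have hq2 : q (|g i| + |d i|) ≤ q (g i) + q (d i) := by
            calc q (|g i| + |d i|) ≤ q |g i| + q |d i| := hq_add _ _
              _ = q (g i) + q (d i) := by rw [hqabs, hqabs]
          exact hq1.trans (hq2.trans (add_le_add h2 h3))
  refine ⟨?_, ?_, ?_, ?_, ?_, ?_⟩
  · -- nY ⊆ finY
    intro κ hκ
    rw [hmem_n] at hκ
    rw [hmem_fin]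
    by_cases hne : (Sdom q κ).Nonempty
    · exact hne
    · have hempty : Sdom q κ = ∅ := Set.not_nonempty_iff_eq_empty.mp hne
      rw [hempty] at hκ
      have hall := all_nonpos_of_glb_empty hκ
      refine ⟨0, ?_⟩
      induction κ using Germ.inductionOn with
      | h f =>
        rw [Sdom_coe q]
        exact Eventually.of_forall fun i => hall (q (f i))
  · -- 0 ∈ nY
    rw [hmem_n]
    have h0 : (0 : E) ∈ Sdom q 0 := by
      show Germ.map q 0 ≤ (↑(0 : E) : γ* E)
      have : (0 : γ* Y) = (↑(0 : Y) : γ* Y) := rfl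
      rw [this, Germ.map_const, (hq_zero 0).mpr rfl]
    exact ⟨Sdom_lb q hq_nonneg 0, fun b hb => hb h0⟩
  · -- closed under addition
    intro κ ξ hκ hξ
    rw [hmem_n] at hκ hξ ⊢
    refine ⟨Sdom_lb q hq_nonneg _, fun b hb => ?_⟩
    have hbv : ∀ v ∈ Sdom q ξ, b ≤ v := by
      intro v hv
      have : b - v ≤ 0 := by
        refine hκ.2 fun u hu => ?_
        have := hb (hSadd κ ξ hu hv)
        exact sub_le_iff_le_add.mpr this
      exact sub_nonpos.mp this
    exact hξ.2 hbv
  · -- closed under scalar multiplication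
    intro c κ hκ
    rw [hmem_n] at hκ ⊢
    by_cases hne : (Sdom q κ).Nonempty
    · refine ⟨Sdom_lb q hq_nonneg _, fun b hb => ?_⟩
      refine le_zero_of_le_nsmul (Sdom q κ)
        (fun u hu v hv => Sdom_inf q hu hv) hκ hne ⌈|c|⌉₊ b fun u hu => ?_
      exact hb (hSsmul c κ hu)
    · have hempty : Sdom q κ = ∅ := Set.not_nonempty_iff_eq_empty.mp hne
      rw [hempty] at hκ
      exact glb_of_all_nonpos (all_nonpos_of_glb_empty hκ) _
  · -- ideal property
    intro κ ξ hle hξ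
    rw [hmem_n] at hξ ⊢
    exact ⟨Sdom_lb q hq_nonneg _, fun b hb => hξ.2 fun u hu => hb (hSmono κ ξ hle hu)⟩
  · -- the quotient norm is monotone
    rintro κ ξ _ _ ⟨d, hd, hle⟩ e₁ e₂ h₁ h₂
    rw [hmem_n] at hd
    have h₁' : IsGLB (Sdom q κ) e₁ := h₁
    have h₂' : IsGLB (Sdom q ξ) e₂ := h₂
    refine h₂'.2 fun v hv => ?_
    have : e₁ - v ≤ 0 := by
      refine hd.2 fun w hw => ?_
      have := h₁'.1 (hStri κ ξ d hle hv hw)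
      exact sub_le_iff_le_add.mpr (this.trans_eq (add_comm v w))
    exact sub_nonpos.mp this
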